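/- (Regularizing-kernel bound on weighted Besov functions, Lemma 4.2(i).) Let w be a G-controlled weight, {Q_t} a G-type semigroup, and {K_t} a β̄-regularizing kernel admissible for {Q_t} with parameters δ, C_K. For every α ≤ 0 there is a constant C, depending only on G and w, such that for every measurable f with ‖f‖_{L∞(w)} < ∞, every multi-index k with |k|_𝔰 < δ and every t ∈ (0,1], one has ‖∂^k K_t f‖_{L∞(w)} ≤ C C_K t^{(α+β̄−|k|_𝔰)/ℓ−1} N, where N := sup_{0<s≤1} s^{−α/ℓ} ‖Q_s f‖_{L∞(w)} (assumed finite). Consequently, if |k|_𝔰 < min(α+β̄, δ), the integral ∫₀¹ ∂^k K_t f dt converges absolutely in the norm ‖·‖_{L∞(w)}. -/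

import Mathlib

open MeasureTheory Set Filter Topology
open scoped ENNReal

noncomputable section

/-- The anisotropic norm `‖x‖_𝔰 = ∑ i, |x i| ^ (1 / 𝔰 i)`. -/
def sNorm {d : ℕ} (𝔰 : Fin (d + 1) → ℝ) (x : Fin (d + 1) → ℝ) : ℝ :=
  ∑ i, |x i| ^ (1 / 𝔰 i)

/-- The scaled degree `|k|_𝔰 = ∑ i, 𝔰 i * k i` of a multiindex `k`. -/
def sDeg {d : ℕ} (𝔰 : Fin (d + 1) → ℝ) (k : Fin (d + 1) → ℕ) : ℝ :=
  ∑ i, 𝔰 i * (k i : ℝ)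

/-- The rescaled function `G_t(x) = t^{-|𝔰|/ℓ} G(t^{-𝔰/ℓ} x)`. -/
def Gt {d : ℕ} (𝔰 : Fin (d + 1) → ℝ) (ℓ : ℝ) (G : (Fin (d + 1) → ℝ) → ℝ)
    (t : ℝ) (x : Fin (d + 1) → ℝ) : ℝ :=
  t ^ (-(∑ i, 𝔰 i) / ℓ) * G fun i => t ^ (-𝔰 i / ℓ) * x i

/-- The temporal weight `φ(x) = min(|x₁|^{1/𝔰₁}, 1)`. -/
def phi {d : ℕ} (𝔰 : Fin (d + 1) → ℝ) (x : Fin (d + 1) → ℝ) : ℝ :=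
  min (|x 0| ^ (1 / 𝔰 0)) 1

/-- `φ(x,y) = min(φ(x), φ(y))`. -/
def phi2 {d : ℕ} (𝔰 : Fin (d + 1) → ℝ) (x y : Fin (d + 1) → ℝ) : ℝ :=
  min (phi 𝔰 x) (phi 𝔰 y)

/-- The weighted sup norm `‖f‖_{L∞(u)} = sup_x |f x| * u x`, valued in `ℝ≥0∞`. -/
def wNorm {d : ℕ} (u f : (Fin (d + 1) → ℝ) → ℝ) : ℝ≥0∞ :=
  ⨆ x, ENNReal.ofReal (|f x| * u x)

/-- A `G`-controlled weight `w` with control function `wStar`. -/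
structure GControlled {d : ℕ} (𝔰 : Fin (d + 1) → ℝ) (ℓ : ℝ)
    (G : (Fin (d + 1) → ℝ) → ℝ) (w wStar : (Fin (d + 1) → ℝ) → ℝ) : Prop where
  cont : Continuous w
  pos : ∀ x, 0 < w x
  le_one : ∀ x, w x ≤ 1
  star_cont : Continuous wStar
  one_le_star : ∀ x, 1 ≤ wStar x
  submul : ∀ x y, w (x + y) ≤ wStar x * w y
  moment : ∀ n : ℝ, 0 ≤ n → ∀ T : ℝ, 0 < T → ∃ B : ℝ, ∀ t ∈ Set.Ioc (0 : ℝ) T,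
    ∀ x, sNorm 𝔰 x ^ n * wStar (fun i => t ^ (𝔰 i / ℓ) * x i) * G x ≤ B

/-- A `G`-type semigroup `Q`. -/
structure GSemigroup {d : ℕ} (𝔰 : Fin (d + 1) → ℝ) (ℓ : ℝ)
    (G : (Fin (d + 1) → ℝ) → ℝ)
    (Q : ℝ → (Fin (d + 1) → ℝ) → (Fin (d + 1) → ℝ) → ℝ) : Prop where
  cont : ∀ t : ℝ, 0 < t →
    Continuous fun p : (Fin (d + 1) → ℝ) × (Fin (d + 1) → ℝ) => Q t p.1 p.2
  semigroup : ∀ s t : ℝ, 0 < s → s < t → ∀ x y,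
    (∫ z, Q (t - s) x z * Q s z y) = Q t x y
  conservative : ∀ x, Tendsto (fun t => ∫ y, Q t x y) (𝓝[>] (0 : ℝ)) (𝓝 1)
  upper : ∃ C₁ : ℝ, 0 < C₁ ∧ ∀ t : ℝ, 0 < t → ∀ x y,
    |Q t x y| ≤ C₁ * Gt 𝔰 ℓ G t (x - y)
  timederiv : ∃ C₂ : ℝ, 0 < C₂ ∧ ∀ x y, ∀ t : ℝ, 0 < t → ∃ q : ℝ,
    HasDerivAt (fun s => Q s x y) q t ∧ |q| ≤ C₂ * t⁻¹ * Gt 𝔰 ℓ G t (x - y)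

/-- The finite set of multiindices `k` with `|k|_𝔰 < c`. -/
def mIdxBelow {d : ℕ} (𝔰 : Fin (d + 1) → ℝ) (c : ℝ) : Finset (Fin (d + 1) → ℕ) :=
  (Fintype.piFinset fun _ : Fin (d + 1) => Finset.range (Nat.ceil (max c 0) + 1)).filter
    fun k => sDeg 𝔰 k < c

/-- A `β̄`-regularizing kernel `K` admissible for the semigroup `Q`, together with
the family `DK k = ∂_x^k K` of its partial derivatives in the first space variable. -/
structure RegKernel {d : ℕ} (𝔰 : Fin (d + 1) → ℝ) (ℓ : ℝ)
    (G : (Fin (d + 1) → ℝ) → ℝ)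
    (Q : ℝ → (Fin (d + 1) → ℝ) → (Fin (d + 1) → ℝ) → ℝ)
    (βb δ CK : ℝ)
    (K : ℝ → (Fin (d + 1) → ℝ) → (Fin (d + 1) → ℝ) → ℝ)
    (DK : (Fin (d + 1) → ℕ) → ℝ → (Fin (d + 1) → ℝ) → (Fin (d + 1) → ℝ) → ℝ) :
    Prop where
  dk_zero : DK 0 = K
  cont : ∀ k : Fin (d + 1) → ℕ, sDeg 𝔰 k < δ → ∀ t : ℝ, 0 < t →
    Continuous fun p : (Fin (d + 1) → ℝ) × (Fin (d + 1) → ℝ) => DK k t p.1 p.2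
  hasDeriv : ∀ (k : Fin (d + 1) → ℕ) (i : Fin (d + 1)),
    sDeg 𝔰 (k + Pi.single i 1) < δ → ∀ t : ℝ, 0 < t → ∀ x y,
      HasDerivAt (fun s : ℝ => DK k t (Function.update x i s) y)
        (DK (k + Pi.single i 1) t x y) (x i)
  conv : ∀ s t : ℝ, 0 < s → s < t → ∀ x y,
    (∫ z, K (t - s) x z * Q s z y) = K t x y
  upper : ∀ k : Fin (d + 1) → ℕ, sDeg 𝔰 k < δ → ∀ t : ℝ, 0 < t → ∀ x y,
    |DK k t x y| ≤ CK * t ^ ((βb - sDeg 𝔰 k) / ℓ - 1) * Gt 𝔰 ℓ G t (x - y)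
  taylor : ∀ k : Fin (d + 1) → ℕ, sDeg 𝔰 k < δ → ∀ t : ℝ, 0 < t →
    ∀ x y h, sNorm 𝔰 h ≤ t ^ (1 / ℓ) →
      |DK k t (x + h) y - ∑ l ∈ mIdxBelow 𝔰 (δ - sDeg 𝔰 k),
          ((∏ i, h i ^ l i) / ∏ i, ((l i).factorial : ℝ)) * DK (k + l) t x y|
        ≤ CK * sNorm 𝔰 h ^ (δ - sDeg 𝔰 k) * t ^ ((βb - δ) / ℓ - 1) *
            Gt 𝔰 ℓ G t (x - y)

section Aux

variable {d : ℕ}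

lemma sNorm_nonneg (𝔰 : Fin (d+1) → ℝ) (x : Fin (d+1) → ℝ) : 0 ≤ sNorm 𝔰 x :=
  Finset.sum_nonneg fun i _ => Real.rpow_nonneg (abs_nonneg _) _

lemma Gt_nonneg {𝔰 : Fin (d+1) → ℝ} {ℓ : ℝ} {G : (Fin (d+1) → ℝ) → ℝ}
    (hG : ∀ x, 0 ≤ G x) {t : ℝ} (ht : 0 < t) (x : Fin (d+1) → ℝ) : 0 ≤ Gt 𝔰 ℓ G t x :=
  mul_nonneg (Real.rpow_nonneg ht.le _) (hG _)

lemma Gt_le_const {𝔰 : Fin (d+1) → ℝ} {ℓ : ℝ} {G : (Fin (d+1) → ℝ) → ℝ} {B : ℝ}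
    (hGB : ∀ x, G x ≤ B) {t : ℝ} (ht : 0 < t) (x : Fin (d+1) → ℝ) :
    Gt 𝔰 ℓ G t x ≤ t ^ (-(∑ i, 𝔰 i) / ℓ) * B :=
  mul_le_mul_of_nonneg_left (hGB _) (Real.rpow_nonneg ht.le _)

/-- anisotropic scaling change of variables for lower integrals -/
lemma lintegral_scale (c : Fin (d+1) → ℝ) (hc : ∀ i, 0 < c i)
    (F : (Fin (d+1) → ℝ) → ℝ≥0∞) (hF : Measurable F) :
    ∫⁻ x, F x = ENNReal.ofReal (∏ i, c i) *
      ∫⁻ x : Fin (d+1) → ℝ, F (fun i => c i * x i) := by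
  classical
  set f : ((Fin (d+1) → ℝ) →ₗ[ℝ] (Fin (d+1) → ℝ)) := Matrix.toLin' (Matrix.diagonal c) with hf
  have hprod : (0:ℝ) < ∏ i, c i := Finset.prod_pos fun i _ => hc i
  have hdet : LinearMap.det f = ∏ i, c i := by
    rw [hf, LinearMap.det_toLin', Matrix.det_diagonal]
  have hne : LinearMap.det f ≠ 0 := by rw [hdet]; exact ne_of_gt hprod
  have hmap := Real.map_linearMap_volume_pi_eq_smul_volume_pi hne
  have hfm : Measurable f := f.continuous_of_finiteDimensional.measurable
  have happ : ∀ x : Fin (d+1) → ℝ, f x = fun i => c i * x i := by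
    intro x; funext i
    simp [hf, Matrix.toLin'_apply, Matrix.mulVec_diagonal]
  have h1 : (∫⁻ x : Fin (d+1) → ℝ, F (fun i => c i * x i))
      = ENNReal.ofReal ((∏ i, c i)⁻¹) * ∫⁻ x, F x := by
    calc (∫⁻ x : Fin (d+1) → ℝ, F (fun i => c i * x i)) = ∫⁻ x, F (f x) := by simp_rw [happ]
    _ = ∫⁻ y, F y ∂(Measure.map f volume) := (lintegral_map hF hfm).symm
    _ = ENNReal.ofReal ((∏ i, c i)⁻¹) * ∫⁻ x, F x := by
        rw [hmap, lintegral_smul_measure, hdet, abs_of_pos (inv_pos.mpr hprod), smul_eq_mul]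
  rw [h1, ← mul_assoc, ← ENNReal.ofReal_mul (le_of_lt hprod), mul_inv_cancel₀ (ne_of_gt hprod),
    ENNReal.ofReal_one, one_mul]

end Aux
section Aux2

variable {d : ℕ}

/-- The decay exponent used in our integrable majorant. -/
def nExp (𝔰 : Fin (d+1) → ℝ) : ℝ := ((d:ℝ) + 2) * ∑ i, 𝔰 i

/-- The finite integral of the majorant. -/
def Jint (𝔰 : Fin (d+1) → ℝ) : ℝ≥0∞ :=
  ∫⁻ x : Fin (d+1) → ℝ, ENNReal.ofReal ((1 + sNorm 𝔰 x ^ nExp 𝔰)⁻¹)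

lemma one_add_sNorm_pow_pos (𝔰 : Fin (d+1) → ℝ) (x : Fin (d+1) → ℝ) :
    (0:ℝ) < 1 + sNorm 𝔰 x ^ nExp 𝔰 := by
  have := Real.rpow_nonneg (sNorm_nonneg 𝔰 x) (nExp 𝔰)
  linarith

lemma exists_keyBound {𝔰 : Fin (d+1) → ℝ} (h𝔰 : ∀ i, 1 ≤ 𝔰 i) {ℓ : ℝ} (hℓ : 0 < ℓ)
    {G : (Fin (d+1) → ℝ) → ℝ} (hGnonneg : ∀ x, 0 ≤ G x)
    {w wStar : (Fin (d+1) → ℝ) → ℝ} (hw : GControlled 𝔰 ℓ G w wStar) :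
    ∃ B : ℝ, 1 ≤ B ∧ (∀ x, G x ≤ B) ∧ ∀ t ∈ Set.Ioc (0:ℝ) 1, ∀ x,
      wStar (fun i => t ^ (𝔰 i / ℓ) * x i) * G x ≤ B * (1 + sNorm 𝔰 x ^ nExp 𝔰)⁻¹ := by
  have hS : (0:ℝ) ≤ ∑ i, 𝔰 i :=
    Finset.sum_nonneg fun i _ => le_trans zero_le_one (h𝔰 i)
  have hn : (0:ℝ) ≤ nExp 𝔰 := by
    have : (0:ℝ) ≤ (d:ℝ) + 2 := by positivity
    exact mul_nonneg this hS
  obtain ⟨B₀, hB₀⟩ := hw.moment 0 le_rfl 1 one_pos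
  obtain ⟨Bn, hBn⟩ := hw.moment (nExp 𝔰) hn 1 one_pos
  refine ⟨max (B₀ + Bn) 1, le_max_right _ _, ?_, ?_⟩
  · intro x
    have h1 := hB₀ 1 ⟨one_pos, le_rfl⟩ x
    rw [Real.rpow_zero, one_mul] at h1
    have hst := hw.one_le_star (fun i => (1:ℝ) ^ (𝔰 i / ℓ) * x i)
    have : G x ≤ wStar (fun i => (1:ℝ) ^ (𝔰 i / ℓ) * x i) * G x :=
      le_mul_of_one_le_left (hGnonneg x) hst
    calc G x ≤ B₀ := this.trans h1
    _ ≤ B₀ + Bn := by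
        have h2 := hBn 1 ⟨one_pos, le_rfl⟩ 0
        have h3 : (0:ℝ) ≤ sNorm 𝔰 0 ^ nExp 𝔰 * wStar (fun i => (1:ℝ) ^ (𝔰 i / ℓ) * (0:Fin (d+1) → ℝ) i) * G 0 := by
          have := hw.one_le_star (fun i => (1:ℝ) ^ (𝔰 i / ℓ) * (0:Fin (d+1) → ℝ) i)
          have hg := hGnonneg 0
          have := Real.rpow_nonneg (sNorm_nonneg 𝔰 0) (nExp 𝔰)
          positivity
        linarith
    _ ≤ max (B₀ + Bn) 1 := le_max_left _ _
  · intro t ht x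
    have h0 := hB₀ t ht x
    rw [Real.rpow_zero, one_mul] at h0
    have hn' := hBn t ht x
    have hpos := one_add_sNorm_pow_pos 𝔰 x
    rw [← div_eq_mul_inv, le_div_iff₀ hpos]
    have hmax : B₀ + Bn ≤ max (B₀ + Bn) 1 := le_max_left _ _
    have hsplit : wStar (fun i => t ^ (𝔰 i / ℓ) * x i) * G x * (1 + sNorm 𝔰 x ^ nExp 𝔰)
        = wStar (fun i => t ^ (𝔰 i / ℓ) * x i) * G x
          + (sNorm 𝔰 x ^ nExp 𝔰 * wStar (fun i => t ^ (𝔰 i / ℓ) * x i)) * G x := by ring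
    rw [hsplit]
    linarith

end Aux2
section Aux3

variable {d : ℕ}

lemma sNorm_ge {𝔰 : Fin (d+1) → ℝ} (h𝔰 : ∀ i, 1 ≤ 𝔰 i) {x : Fin (d+1) → ℝ}
    (hx : 1 ≤ ‖x‖) : ‖x‖ ^ (1 / ∑ i, 𝔰 i) ≤ sNorm 𝔰 x := by
  have hS1 : (1:ℝ) ≤ ∑ i, 𝔰 i := by
    calc (1:ℝ) ≤ 𝔰 0 := h𝔰 0
    _ ≤ ∑ i, 𝔰 i := Finset.single_le_sum (f := 𝔰)
        (fun i _ => le_trans zero_le_one (h𝔰 i)) (Finset.mem_univ 0)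
  have hSpos : (0:ℝ) < ∑ i, 𝔰 i := lt_of_lt_of_le one_pos hS1
  -- the sup norm is attained at some coordinate
  obtain ⟨i, -, hi⟩ := Finset.exists_mem_eq_sup (Finset.univ : Finset (Fin (d+1)))
    ⟨0, Finset.mem_univ 0⟩ (fun i => ‖x i‖₊)
  have hnorm : ‖x‖ = |x i| := by
    rw [Pi.norm_def, hi]; simp [Real.norm_eq_abs]
  calc ‖x‖ ^ (1 / ∑ i, 𝔰 i) ≤ ‖x‖ ^ (1 / 𝔰 i) := by
        apply Real.rpow_le_rpow_of_exponent_le hx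
        apply div_le_div_of_nonneg_left zero_le_one (lt_of_lt_of_le zero_lt_one (h𝔰 i)) ?_
        exact Finset.single_le_sum (f := 𝔰) (fun j _ => le_trans zero_le_one (h𝔰 j))
          (Finset.mem_univ i)
  _ = |x i| ^ (1 / 𝔰 i) := by rw [hnorm]
  _ ≤ sNorm 𝔰 x := Finset.single_le_sum
      (f := fun j => |x j| ^ (1 / 𝔰 j))
      (fun j _ => Real.rpow_nonneg (abs_nonneg _) _) (Finset.mem_univ i)

lemma J_lt_top {𝔰 : Fin (d+1) → ℝ} (h𝔰 : ∀ i, 1 ≤ 𝔰 i) : Jint 𝔰 < ⊤ := by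
  have hS1 : (1:ℝ) ≤ ∑ i, 𝔰 i := by
    calc (1:ℝ) ≤ 𝔰 0 := h𝔰 0
    _ ≤ ∑ i, 𝔰 i := Finset.single_le_sum (f := 𝔰)
        (fun i _ => le_trans zero_le_one (h𝔰 i)) (Finset.mem_univ 0)
  have hSpos : (0:ℝ) < ∑ i, 𝔰 i := lt_of_lt_of_le one_pos hS1
  set r : ℝ := (d:ℝ) + 2 with hr
  have hrpos : (0:ℝ) < r := by positivity
  -- pointwise comparison
  have hpt : ∀ x : Fin (d+1) → ℝ, (1 + sNorm 𝔰 x ^ nExp 𝔰)⁻¹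
      ≤ 2 ^ r * (1 + ‖x‖) ^ (-r) := by
    intro x
    have hxnn : (0:ℝ) ≤ ‖x‖ := norm_nonneg x
    have h1x : (0:ℝ) < 1 + ‖x‖ := by linarith
    have hpos := one_add_sNorm_pow_pos 𝔰 x
    rcases le_or_gt ‖x‖ 1 with hx | hx
    · have h2 : (1 + ‖x‖) ^ (-r) ≥ 2 ^ (-r) :=
        Real.rpow_le_rpow_of_nonpos h1x (by linarith) (by linarith)
      have h3 : (1 + sNorm 𝔰 x ^ nExp 𝔰)⁻¹ ≤ 1 := by
        rw [inv_le_one_iff₀]; right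
        have := Real.rpow_nonneg (sNorm_nonneg 𝔰 x) (nExp 𝔰); linarith
      calc (1 + sNorm 𝔰 x ^ nExp 𝔰)⁻¹ ≤ 1 := h3
      _ = 2 ^ r * 2 ^ (-r) := by
          rw [← Real.rpow_add two_pos]; simp
      _ ≤ 2 ^ r * (1 + ‖x‖) ^ (-r) := by
          apply mul_le_mul_of_nonneg_left h2 (Real.rpow_nonneg (by norm_num) _)
    · -- ‖x‖ ≥ 1
      have hx1 : (1:ℝ) ≤ ‖x‖ := hx.le
      have hkey : ((1 + ‖x‖) / 2) ^ r ≤ 1 + sNorm 𝔰 x ^ nExp 𝔰 := by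
        have h5 : (1 + ‖x‖) / 2 ≤ ‖x‖ := by linarith
        have h6 : ((1 + ‖x‖) / 2) ^ r ≤ ‖x‖ ^ r :=
          Real.rpow_le_rpow (by linarith) h5 hrpos.le
        have hnexp : (0:ℝ) ≤ nExp 𝔰 := by
          have : (0:ℝ) ≤ (d:ℝ) + 2 := by positivity
          exact mul_nonneg this hSpos.le
        have h7 : ‖x‖ ^ r ≤ sNorm 𝔰 x ^ nExp 𝔰 := by
          have h8 : (‖x‖ ^ (1 / ∑ i, 𝔰 i)) ^ nExp 𝔰 ≤ sNorm 𝔰 x ^ nExp 𝔰 :=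
            Real.rpow_le_rpow (Real.rpow_nonneg hxnn _) (sNorm_ge h𝔰 hx1) hnexp
          rw [← Real.rpow_mul hxnn] at h8
          have heq : 1 / (∑ i, 𝔰 i) * nExp 𝔰 = r := by
            rw [show nExp 𝔰 = ((d:ℝ) + 2) * ∑ i, 𝔰 i from rfl]
            field_simp
            exact hr.symm
          rwa [heq] at h8
        linarith
      have h9 : (0:ℝ) < ((1 + ‖x‖) / 2) ^ r := Real.rpow_pos_of_pos (by linarith) _
      have h10 : (1 + sNorm 𝔰 x ^ nExp 𝔰)⁻¹ ≤ (((1 + ‖x‖) / 2) ^ r)⁻¹ :=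
        inv_anti₀ h9 hkey
      calc (1 + sNorm 𝔰 x ^ nExp 𝔰)⁻¹ ≤ (((1 + ‖x‖) / 2) ^ r)⁻¹ := h10
      _ = 2 ^ r * (1 + ‖x‖) ^ (-r) := by
          rw [Real.div_rpow (by linarith) (by norm_num), Real.rpow_neg h1x.le]
          field_simp
  -- integrability of the comparison function
  have hint : Integrable (fun x : Fin (d+1) → ℝ => (1 + ‖x‖) ^ (-r)) := by
    apply integrable_one_add_norm
    rw [Module.finrank_fin_fun]; rw [hr]; push_cast; linarith
  have hlt : (∫⁻ x : Fin (d+1) → ℝ, ENNReal.ofReal ((1 + ‖x‖) ^ (-r))) < ⊤ :=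
    hint.lintegral_lt_top
  calc Jint 𝔰 ≤ ∫⁻ x : Fin (d+1) → ℝ, ENNReal.ofReal (2 ^ r * (1 + ‖x‖) ^ (-r)) := by
        apply lintegral_mono; intro x; exact ENNReal.ofReal_le_ofReal (hpt x)
  _ = ENNReal.ofReal (2 ^ r) * ∫⁻ x : Fin (d+1) → ℝ, ENNReal.ofReal ((1 + ‖x‖) ^ (-r)) := by
      simp_rw [ENNReal.ofReal_mul (Real.rpow_nonneg (by norm_num : (0:ℝ) ≤ 2) r)]
      exact lintegral_const_mul' _ _ ENNReal.ofReal_ne_top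
  _ < ⊤ := ENNReal.mul_lt_top ENNReal.ofReal_lt_top hlt

end Aux3
section Aux4

variable {d : ℕ}

lemma measurable_GtW {𝔰 : Fin (d+1) → ℝ} {ℓ : ℝ} {G : (Fin (d+1) → ℝ) → ℝ}
    (hGmeas : Measurable G) {wStar : (Fin (d+1) → ℝ) → ℝ} (hst : Continuous wStar)
    (t : ℝ) :
    Measurable fun v : Fin (d+1) → ℝ => ENNReal.ofReal (Gt 𝔰 ℓ G t v * wStar v) := by
  apply Measurable.ennreal_ofReal
  apply Measurable.mul _ hst.measurable
  unfold Gt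
  apply Measurable.const_mul
  exact hGmeas.comp (measurable_pi_lambda _ fun i => (measurable_pi_apply i).const_mul _)

lemma GW0 {𝔰 : Fin (d+1) → ℝ} (h𝔰 : ∀ i, 1 ≤ 𝔰 i) {ℓ : ℝ} (hℓ : 0 < ℓ)
    {G : (Fin (d+1) → ℝ) → ℝ} (hGmeas : Measurable G) (hGnonneg : ∀ x, 0 ≤ G x)
    {w wStar : (Fin (d+1) → ℝ) → ℝ} (hw : GControlled 𝔰 ℓ G w wStar)
    {B : ℝ} (hB1 : 1 ≤ B)
    (hB : ∀ t ∈ Set.Ioc (0:ℝ) 1, ∀ x,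
      wStar (fun i => t ^ (𝔰 i / ℓ) * x i) * G x ≤ B * (1 + sNorm 𝔰 x ^ nExp 𝔰)⁻¹)
    {t : ℝ} (ht : t ∈ Set.Ioc (0:ℝ) 1) :
    (∫⁻ v : Fin (d+1) → ℝ, ENNReal.ofReal (Gt 𝔰 ℓ G t v * wStar v))
      ≤ ENNReal.ofReal B * Jint 𝔰 := by
  have htpos : 0 < t := ht.1
  set c : Fin (d+1) → ℝ := fun i => t ^ (𝔰 i / ℓ) with hc
  have hcpos : ∀ i, 0 < c i := fun i => Real.rpow_pos_of_pos htpos _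
  rw [lintegral_scale c hcpos _ (measurable_GtW hGmeas hw.star_cont t)]
  have hprod : ∏ i, c i = t ^ ((∑ i, 𝔰 i) / ℓ) := by
    rw [hc]
    rw [show (∑ i, 𝔰 i) / ℓ = ∑ i, 𝔰 i / ℓ from Finset.sum_div _ _ _]
    exact (Real.rpow_sum_of_pos htpos _ _).symm
  -- bound the rescaled integrand
  have hpt : ∀ v : Fin (d+1) → ℝ,
      ENNReal.ofReal (Gt 𝔰 ℓ G t (fun i => c i * v i) * wStar (fun i => c i * v i))
        ≤ ENNReal.ofReal (t ^ (-(∑ i, 𝔰 i) / ℓ) * B)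
            * ENNReal.ofReal ((1 + sNorm 𝔰 v ^ nExp 𝔰)⁻¹) := by
    intro v
    have hGt : Gt 𝔰 ℓ G t (fun i => c i * v i) = t ^ (-(∑ i, 𝔰 i) / ℓ) * G v := by
      unfold Gt
      congr 1
      congr 1
      funext i
      rw [hc, ← mul_assoc, ← Real.rpow_add htpos]
      rw [show -𝔰 i / ℓ + 𝔰 i / ℓ = 0 by ring, Real.rpow_zero, one_mul]
    rw [hGt, ← ENNReal.ofReal_mul (by positivity)]
    apply ENNReal.ofReal_le_ofReal
    have h1 := hB t ht v
    have h2 : G v * wStar (fun i => c i * v i) ≤ B * (1 + sNorm 𝔰 v ^ nExp 𝔰)⁻¹ := by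
      rw [mul_comm]; exact h1
    calc t ^ (-(∑ i, 𝔰 i) / ℓ) * G v * wStar (fun i => c i * v i)
        = t ^ (-(∑ i, 𝔰 i) / ℓ) * (G v * wStar (fun i => c i * v i)) := by ring
    _ ≤ t ^ (-(∑ i, 𝔰 i) / ℓ) * (B * (1 + sNorm 𝔰 v ^ nExp 𝔰)⁻¹) :=
        mul_le_mul_of_nonneg_left h2 (Real.rpow_nonneg htpos.le _)
    _ = t ^ (-(∑ i, 𝔰 i) / ℓ) * B * (1 + sNorm 𝔰 v ^ nExp 𝔰)⁻¹ := by ring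
  calc ENNReal.ofReal (∏ i, c i) * ∫⁻ v : Fin (d+1) → ℝ,
        ENNReal.ofReal (Gt 𝔰 ℓ G t (fun i => c i * v i) * wStar (fun i => c i * v i))
      ≤ ENNReal.ofReal (∏ i, c i) * ∫⁻ v : Fin (d+1) → ℝ,
          ENNReal.ofReal (t ^ (-(∑ i, 𝔰 i) / ℓ) * B)
            * ENNReal.ofReal ((1 + sNorm 𝔰 v ^ nExp 𝔰)⁻¹) :=
        mul_le_mul_right (lintegral_mono hpt) _
  _ = ENNReal.ofReal (∏ i, c i) * (ENNReal.ofReal (t ^ (-(∑ i, 𝔰 i) / ℓ) * B) * Jint 𝔰) := by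
      rw [lintegral_const_mul' _ _ ENNReal.ofReal_ne_top]; rfl
  _ = ENNReal.ofReal B * Jint 𝔰 := by
      rw [hprod, ← mul_assoc, ← ENNReal.ofReal_mul (Real.rpow_nonneg htpos.le _)]
      congr 2
      rw [← mul_assoc, ← Real.rpow_add htpos]
      rw [show (∑ i, 𝔰 i) / ℓ + -(∑ i, 𝔰 i) / ℓ = 0 by ring, Real.rpow_zero, one_mul]

lemma GW_left {𝔰 : Fin (d+1) → ℝ} (h𝔰 : ∀ i, 1 ≤ 𝔰 i) {ℓ : ℝ} (hℓ : 0 < ℓ)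
    {G : (Fin (d+1) → ℝ) → ℝ} (hGmeas : Measurable G) (hGnonneg : ∀ x, 0 ≤ G x)
    {w wStar : (Fin (d+1) → ℝ) → ℝ} (hw : GControlled 𝔰 ℓ G w wStar)
    {B : ℝ} (hB1 : 1 ≤ B)
    (hB : ∀ t ∈ Set.Ioc (0:ℝ) 1, ∀ x,
      wStar (fun i => t ^ (𝔰 i / ℓ) * x i) * G x ≤ B * (1 + sNorm 𝔰 x ^ nExp 𝔰)⁻¹)
    {t : ℝ} (ht : t ∈ Set.Ioc (0:ℝ) 1) (a : Fin (d+1) → ℝ) :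
    (∫⁻ u : Fin (d+1) → ℝ, ENNReal.ofReal (Gt 𝔰 ℓ G t (a - u) * wStar (a - u)))
      ≤ ENNReal.ofReal B * Jint 𝔰 := by
  have := (Measure.measurePreserving_sub_left
    (volume : Measure (Fin (d+1) → ℝ)) a).lintegral_comp
    (measurable_GtW (𝔰 := 𝔰) (ℓ := ℓ) hGmeas hw.star_cont t)
  rw [show (fun u : Fin (d+1) → ℝ =>
    ENNReal.ofReal (Gt 𝔰 ℓ G t (a - u) * wStar (a - u)))
      = fun u => (fun v => ENNReal.ofReal (Gt 𝔰 ℓ G t v * wStar v)) (a - u) from rfl]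
  rw [this]
  exact GW0 h𝔰 hℓ hGmeas hGnonneg hw hB1 hB ht

lemma GW_right {𝔰 : Fin (d+1) → ℝ} (h𝔰 : ∀ i, 1 ≤ 𝔰 i) {ℓ : ℝ} (hℓ : 0 < ℓ)
    {G : (Fin (d+1) → ℝ) → ℝ} (hGmeas : Measurable G) (hGnonneg : ∀ x, 0 ≤ G x)
    {w wStar : (Fin (d+1) → ℝ) → ℝ} (hw : GControlled 𝔰 ℓ G w wStar)
    {B : ℝ} (hB1 : 1 ≤ B)
    (hB : ∀ t ∈ Set.Ioc (0:ℝ) 1, ∀ x,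
      wStar (fun i => t ^ (𝔰 i / ℓ) * x i) * G x ≤ B * (1 + sNorm 𝔰 x ^ nExp 𝔰)⁻¹)
    {t : ℝ} (ht : t ∈ Set.Ioc (0:ℝ) 1) (y : Fin (d+1) → ℝ) :
    (∫⁻ u : Fin (d+1) → ℝ, ENNReal.ofReal (Gt 𝔰 ℓ G t (u - y) * wStar (u - y)))
      ≤ ENNReal.ofReal B * Jint 𝔰 := by
  have := (measurePreserving_sub_right
    (volume : Measure (Fin (d+1) → ℝ)) y).lintegral_comp
    (measurable_GtW (𝔰 := 𝔰) (ℓ := ℓ) hGmeas hw.star_cont t)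
  rw [show (fun u : Fin (d+1) → ℝ =>
    ENNReal.ofReal (Gt 𝔰 ℓ G t (u - y) * wStar (u - y)))
      = fun u => (fun v => ENNReal.ofReal (Gt 𝔰 ℓ G t v * wStar v)) (u - y) from rfl]
  rw [this]
  exact GW0 h𝔰 hℓ hGmeas hGnonneg hw hB1 hB ht

end Aux4
section Aux5

variable {d : ℕ}

lemma measurable_Gt_sub {𝔰 : Fin (d+1) → ℝ} {ℓ : ℝ} {G : (Fin (d+1) → ℝ) → ℝ}
    (hGmeas : Measurable G) (t : ℝ) (y : Fin (d+1) → ℝ) :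
    Measurable fun z : Fin (d+1) → ℝ => Gt 𝔰 ℓ G t (z - y) := by
  unfold Gt
  apply Measurable.const_mul
  exact hGmeas.comp (measurable_pi_lambda _ fun i =>
    (((measurable_pi_apply i).sub measurable_const)).const_mul _ |>.comp
      measurable_id |>.mono le_rfl le_rfl)

lemma integrable_Gt_sub {𝔰 : Fin (d+1) → ℝ} (h𝔰 : ∀ i, 1 ≤ 𝔰 i) {ℓ : ℝ} (hℓ : 0 < ℓ)
    {G : (Fin (d+1) → ℝ) → ℝ} (hGmeas : Measurable G) (hGnonneg : ∀ x, 0 ≤ G x)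
    {w wStar : (Fin (d+1) → ℝ) → ℝ} (hw : GControlled 𝔰 ℓ G w wStar)
    {B : ℝ} (hB1 : 1 ≤ B)
    (hB : ∀ t ∈ Set.Ioc (0:ℝ) 1, ∀ x,
      wStar (fun i => t ^ (𝔰 i / ℓ) * x i) * G x ≤ B * (1 + sNorm 𝔰 x ^ nExp 𝔰)⁻¹)
    {t : ℝ} (ht : t ∈ Set.Ioc (0:ℝ) 1) (y : Fin (d+1) → ℝ) :
    Integrable (fun z : Fin (d+1) → ℝ => Gt 𝔰 ℓ G t (z - y)) := by
  refine ⟨(measurable_Gt_sub hGmeas t y).aestronglyMeasurable, ?_⟩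
  rw [HasFiniteIntegral, lintegral_enorm_of_nonneg
    (fun z => Gt_nonneg hGnonneg ht.1 _)]
  calc (∫⁻ z : Fin (d+1) → ℝ, ENNReal.ofReal (Gt 𝔰 ℓ G t (z - y)))
      ≤ ∫⁻ z : Fin (d+1) → ℝ, ENNReal.ofReal (Gt 𝔰 ℓ G t (z - y) * wStar (z - y)) := by
        apply lintegral_mono; intro z
        apply ENNReal.ofReal_le_ofReal
        exact le_mul_of_one_le_right (Gt_nonneg hGnonneg ht.1 _) (hw.one_le_star _)
  _ ≤ ENNReal.ofReal B * Jint 𝔰 := GW_right h𝔰 hℓ hGmeas hGnonneg hw hB1 hB ht y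
  _ < ⊤ := ENNReal.mul_lt_top ENNReal.ofReal_lt_top (J_lt_top h𝔰)

end Aux5
section Aux6

variable {d : ℕ}

lemma sDeg_add (𝔰 : Fin (d+1) → ℝ) (a b : Fin (d+1) → ℕ) :
    sDeg 𝔰 (a + b) = sDeg 𝔰 a + sDeg 𝔰 b := by
  unfold sDeg
  rw [← Finset.sum_add_distrib]
  congr 1; funext i
  simp [Pi.add_apply]; push_cast; ring

lemma sDeg_single (𝔰 : Fin (d+1) → ℝ) (i : Fin (d+1)) :
    sDeg 𝔰 (Pi.single i 1) = 𝔰 i := by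
  unfold sDeg
  rw [Finset.sum_eq_single i]
  · simp
  · intro j _ hj; simp [Pi.single_eq_of_ne hj]
  · intro h; exact absurd (Finset.mem_univ i) h

lemma sDeg_nonneg {𝔰 : Fin (d+1) → ℝ} (h𝔰 : ∀ i, 1 ≤ 𝔰 i) (k : Fin (d+1) → ℕ) :
    0 ≤ sDeg 𝔰 k :=
  Finset.sum_nonneg fun i _ =>
    mul_nonneg (le_trans zero_le_one (h𝔰 i)) (Nat.cast_nonneg _)

/-- The kernel identity `∂^k K_t = ∂^k K_{t-s} * Q_s`, obtained from `conv` by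
differentiation under the integral sign. -/
lemma kernelId {𝔰 : Fin (d+1) → ℝ} (h𝔰 : ∀ i, 1 ≤ 𝔰 i) {ℓ : ℝ} (hℓ : 0 < ℓ)
    {G : (Fin (d+1) → ℝ) → ℝ} (hGmeas : Measurable G) (hGnonneg : ∀ x, 0 ≤ G x)
    {w wStar : (Fin (d+1) → ℝ) → ℝ} (hw : GControlled 𝔰 ℓ G w wStar)
    {Q : ℝ → (Fin (d+1) → ℝ) → (Fin (d+1) → ℝ) → ℝ} (hQ : GSemigroup 𝔰 ℓ G Q)
    {βb δ CK : ℝ}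
    {K : ℝ → (Fin (d+1) → ℝ) → (Fin (d+1) → ℝ) → ℝ}
    {DK : (Fin (d+1) → ℕ) → ℝ → (Fin (d+1) → ℝ) → (Fin (d+1) → ℝ) → ℝ}
    (hK : RegKernel 𝔰 ℓ G Q βb δ CK K DK) (hCKnn : 0 ≤ CK) :
    ∀ (k : Fin (d+1) → ℕ), sDeg 𝔰 k < δ → ∀ t s : ℝ, 0 < s → s < t → t ≤ 1 →
      ∀ x y, DK k t x y = ∫ z, DK k (t - s) x z * Q s z y := by
  obtain ⟨B, hB1, hGB, hB⟩ := exists_keyBound h𝔰 hℓ hGnonneg hw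
  obtain ⟨C₁, hC₁pos, hC₁⟩ := hQ.upper
  suffices H : ∀ m : ℕ, ∀ k : Fin (d+1) → ℕ, (∑ i, k i) = m → sDeg 𝔰 k < δ →
      ∀ t s : ℝ, 0 < s → s < t → t ≤ 1 →
      ∀ x y, DK k t x y = ∫ z, DK k (t - s) x z * Q s z y by
    intro k hk t s hs hst ht1 x y
    exact H (∑ i, k i) k rfl hk t s hs hst ht1 x y
  intro m
  induction m with
  | zero =>
    intro k hsum hk t s hs hst ht1 x y
    have hk0 : k = 0 := by
      funext i
      exact (Finset.sum_eq_zero_iff.mp hsum) i (Finset.mem_univ i)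
    subst hk0
    rw [hK.dk_zero]
    exact (hK.conv s t hs hst x y).symm
  | succ m ih =>
    intro k hsum hk t s hs hst ht1 x y
    -- find a coordinate with k i ≠ 0
    have hne : (∑ i, k i) ≠ 0 := by rw [hsum]; exact Nat.succ_ne_zero m
    obtain ⟨i, -, hki⟩ := Finset.exists_ne_zero_of_sum_ne_zero hne
    set k' : Fin (d+1) → ℕ := Function.update k i (k i - 1) with hk'def
    have hksum : k = k' + Pi.single i 1 := by
      funext j
      by_cases hj : j = i
      · subst hj
        simp [hk'def, Function.update_self, Pi.single_eq_same,
          Nat.succ_pred_eq_of_pos (Nat.pos_of_ne_zero hki)]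
        omega
      · simp [hk'def, Function.update_of_ne hj, Pi.single_eq_of_ne hj]
    have hkdeg : sDeg 𝔰 k = sDeg 𝔰 k' + 𝔰 i := by
      rw [hksum, sDeg_add, sDeg_single]
    have hk' : sDeg 𝔰 k' < δ := by
      have h1 : (1:ℝ) ≤ 𝔰 i := h𝔰 i
      linarith
    have hksum' : (∑ j, k' j) = m := by
      have : (∑ j, k j) = (∑ j, k' j) + 1 := by
        rw [hksum]
        simp only [Pi.add_apply]
        rw [Finset.sum_add_distrib]
        congr 1
        rw [Finset.sum_eq_single i]
        · simp
        · intro j _ hj; simp [Pi.single_eq_of_ne hj]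
        · intro h; exact absurd (Finset.mem_univ i) h
      omega
    -- times
    have htpos : 0 < t := hs.trans hst
    have hτpos : 0 < t - s := sub_pos.mpr hst
    have hτ1 : t - s ≤ 1 := by linarith
    have hsIoc : s ∈ Set.Ioc (0:ℝ) 1 := ⟨hs, by linarith⟩
    -- the inductive identity
    have ihk := ih k' hksum' hk' t s hs hst ht1
    -- bound for products of kernels
    have keybound : ∀ (j : Fin (d+1) → ℕ), sDeg 𝔰 j < δ →
        ∀ (x' z : Fin (d+1) → ℝ),
        ‖DK j (t - s) x' z * Q s z y‖
          ≤ (CK * (t-s) ^ ((βb - sDeg 𝔰 j) / ℓ - 1) * ((t-s) ^ (-(∑ l, 𝔰 l) / ℓ) * B) * C₁)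
            * Gt 𝔰 ℓ G s (z - y) := by
      intro j hj x' z
      rw [norm_mul, Real.norm_eq_abs, Real.norm_eq_abs]
      have h1 : |DK j (t - s) x' z|
          ≤ CK * (t-s) ^ ((βb - sDeg 𝔰 j) / ℓ - 1) * ((t-s) ^ (-(∑ l, 𝔰 l) / ℓ) * B) := by
        calc |DK j (t - s) x' z|
            ≤ CK * (t-s) ^ ((βb - sDeg 𝔰 j) / ℓ - 1) * Gt 𝔰 ℓ G (t-s) (x' - z) :=
              hK.upper j hj (t - s) hτpos x' z
        _ ≤ CK * (t-s) ^ ((βb - sDeg 𝔰 j) / ℓ - 1) * ((t-s) ^ (-(∑ l, 𝔰 l) / ℓ) * B) := by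
            apply mul_le_mul_of_nonneg_left (Gt_le_const hGB hτpos _)
            positivity
      have h2 : |Q s z y| ≤ C₁ * Gt 𝔰 ℓ G s (z - y) := hC₁ s hs z y
      calc |DK j (t - s) x' z| * |Q s z y|
          ≤ (CK * (t-s) ^ ((βb - sDeg 𝔰 j) / ℓ - 1) * ((t-s) ^ (-(∑ l, 𝔰 l) / ℓ) * B))
            * (C₁ * Gt 𝔰 ℓ G s (z - y)) :=
            mul_le_mul h1 h2 (abs_nonneg _) (le_trans (abs_nonneg _) h1)
      _ = (CK * (t-s) ^ ((βb - sDeg 𝔰 j) / ℓ - 1) * ((t-s) ^ (-(∑ l, 𝔰 l) / ℓ) * B) * C₁)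
            * Gt 𝔰 ℓ G s (z - y) := by ring
    -- continuity of sections
    have hcont : ∀ (j : Fin (d+1) → ℕ), sDeg 𝔰 j < δ → ∀ x' : Fin (d+1) → ℝ,
        Continuous fun z => DK j (t - s) x' z * Q s z y := by
      intro j hj x'
      exact ((hK.cont j hj (t-s) hτpos).comp
        (continuous_const.prodMk continuous_id)).mul
        ((hQ.cont s hs).comp (continuous_id.prodMk continuous_const))
    have hintg : ∀ (j : Fin (d+1) → ℕ), sDeg 𝔰 j < δ → ∀ x' : Fin (d+1) → ℝ,
        Integrable (fun z => DK j (t - s) x' z * Q s z y) := by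
      intro j hj x'
      apply Integrable.mono'
        ((integrable_Gt_sub h𝔰 hℓ hGmeas hGnonneg hw hB1 hB hsIoc y).const_mul
          (CK * (t-s) ^ ((βb - sDeg 𝔰 j) / ℓ - 1) * ((t-s) ^ (-(∑ l, 𝔰 l) / ℓ) * B) * C₁))
        ((hcont j hj x').aestronglyMeasurable)
      exact Filter.Eventually.of_forall fun z => keybound j hj x' z
    -- derivative of the left side
    have hkk' : sDeg 𝔰 (k' + Pi.single i 1) < δ := by
      rw [← hksum]; exact hk
    have hderL : HasDerivAt (fun a => DK k' t (Function.update x i a) y)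
        (DK k t x y) (x i) := by
      have := hK.hasDeriv k' i hkk' t htpos x y
      rwa [← hksum] at this
    -- derivative of the right side: dominated convergence
    have hmain := hasDerivAt_integral_of_dominated_loc_of_deriv_le
      (F := fun a z => DK k' (t - s) (Function.update x i a) z * Q s z y)
      (F' := fun a z => DK k (t - s) (Function.update x i a) z * Q s z y)
      (x₀ := x i) (s := Metric.ball (x i) 1) (μ := volume)
      (bound := fun z =>
        (CK * (t-s) ^ ((βb - sDeg 𝔰 k) / ℓ - 1) * ((t-s) ^ (-(∑ l, 𝔰 l) / ℓ) * B) * C₁)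
          * Gt 𝔰 ℓ G s (z - y))
      (Metric.ball_mem_nhds _ one_pos)
      (Filter.Eventually.of_forall fun a =>
        ((hcont k' hk' (Function.update x i a)).aestronglyMeasurable))
      (by
        simp only [Function.update_eq_self]
        exact hintg k' hk' x)
      (by
        simp only [Function.update_eq_self]
        exact ((hcont k hk x).aestronglyMeasurable))
      (Filter.Eventually.of_forall fun z => fun a _ =>
        keybound k hk (Function.update x i a) z)
      ((integrable_Gt_sub h𝔰 hℓ hGmeas hGnonneg hw hB1 hB hsIoc y).const_mul _)
      (Filter.Eventually.of_forall fun z => fun a _ => by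
        have hd := hK.hasDeriv k' i hkk' (t - s) hτpos (Function.update x i a) z
        rw [← hksum] at hd
        have heq : (fun a' => DK k' (t-s)
            (Function.update (Function.update x i a) i a') z)
            = fun a' => DK k' (t-s) (Function.update x i a') z := by
          funext a'; rw [Function.update_idem]
        rw [heq, Function.update_self] at hd
        exact hd.mul_const (Q s z y))
    obtain ⟨-, hderR⟩ := hmain
    -- identify the two functions
    have hfun : (fun a => DK k' t (Function.update x i a) y)
        = fun a => ∫ z, DK k' (t - s) (Function.update x i a) z * Q s z y :=
      funext fun a => ihk (Function.update x i a) y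
    rw [hfun] at hderL
    have := hderL.unique hderR
    rw [this]
    simp only [Function.update_eq_self]

end Aux6
section Aux7

variable {d : ℕ}

/-- Fubini step: apply the kernel to `f` and swap integrals. -/
lemma fubini_step {𝔰 : Fin (d+1) → ℝ} (h𝔰 : ∀ i, 1 ≤ 𝔰 i) {ℓ : ℝ} (hℓ : 0 < ℓ)
    {G : (Fin (d+1) → ℝ) → ℝ} (hGmeas : Measurable G) (hGnonneg : ∀ x, 0 ≤ G x)
    {w wStar : (Fin (d+1) → ℝ) → ℝ} (hw : GControlled 𝔰 ℓ G w wStar)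
    {Q : ℝ → (Fin (d+1) → ℝ) → (Fin (d+1) → ℝ) → ℝ} (hQ : GSemigroup 𝔰 ℓ G Q)
    {βb δ CK : ℝ} (hCKnn : 0 ≤ CK)
    {K : ℝ → (Fin (d+1) → ℝ) → (Fin (d+1) → ℝ) → ℝ}
    {DK : (Fin (d+1) → ℕ) → ℝ → (Fin (d+1) → ℝ) → (Fin (d+1) → ℝ) → ℝ}
    (hK : RegKernel 𝔰 ℓ G Q βb δ CK K DK)
    {B : ℝ} (hB1 : 1 ≤ B)
    (hB : ∀ t ∈ Set.Ioc (0:ℝ) 1, ∀ x,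
      wStar (fun i => t ^ (𝔰 i / ℓ) * x i) * G x ≤ B * (1 + sNorm 𝔰 x ^ nExp 𝔰)⁻¹)
    {f : (Fin (d+1) → ℝ) → ℝ} (hf : Measurable f)
    {Nf : ℝ} (hNf : ∀ y, |f y| * w y ≤ Nf)
    {t' : ℝ} (ht' : t' ∈ Set.Ioc (0:ℝ) 1)
    {k : Fin (d+1) → ℕ} (hk : sDeg 𝔰 k < δ) (x : Fin (d+1) → ℝ) :
    ∫ y, (∫ z, DK k t' x z * Q t' z y) * f y
      = ∫ z, DK k t' x z * ∫ y, Q t' z y * f y := by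
  obtain ⟨C₁, hC₁pos, hC₁⟩ := hQ.upper
  have ht'pos : 0 < t' := ht'.1
  have hwx : 0 < w x := hw.pos x
  have hNf0 : 0 ≤ Nf := le_trans (mul_nonneg (abs_nonneg _) (hw.pos 0).le) (hNf 0)
  set pk : ℝ := (βb - sDeg 𝔰 k) / ℓ - 1 with hpk
  set c0 : ℝ := CK * t' ^ pk * C₁ * Nf * (w x)⁻¹ with hc0
  have hc00 : 0 ≤ c0 := by positivity
  set b1 : (Fin (d+1) → ℝ) → ℝ := fun z => Gt 𝔰 ℓ G t' (x - z) * wStar (x - z) with hb1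
  have hb10 : ∀ z, 0 ≤ b1 z := fun z =>
    mul_nonneg (Gt_nonneg hGnonneg ht'pos _) (le_trans zero_le_one (hw.one_le_star _))
  -- measurability of the product function
  have hHm : Measurable (fun p : (Fin (d+1) → ℝ) × (Fin (d+1) → ℝ) =>
      DK k t' x p.1 * Q t' p.1 p.2 * f p.2) := by
    apply Measurable.mul
    · apply Measurable.mul
      · exact (hK.cont k hk t' ht'pos).measurable.comp
          (measurable_const.prodMk measurable_fst)
      · exact (hQ.cont t' ht'pos).measurable.comp
          (measurable_fst.prodMk measurable_snd)
    · exact hf.comp measurable_snd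
  -- pointwise bound
  have hpt : ∀ z y' : Fin (d+1) → ℝ,
      ‖DK k t' x z * Q t' z y' * f y'‖
        ≤ (c0 * b1 z) * (Gt 𝔰 ℓ G t' (z - y') * wStar (z - y')) := by
    intro z y'
    have h1 : |DK k t' x z| ≤ CK * t' ^ pk * Gt 𝔰 ℓ G t' (x - z) :=
      hK.upper k hk t' ht'pos x z
    have h2 : |Q t' z y'| ≤ C₁ * Gt 𝔰 ℓ G t' (z - y') := hC₁ t' ht'pos z y'
    have h4 : w z ≤ wStar (z - y') * w y' := by
      have := hw.submul (z - y') y'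
      rwa [sub_add_cancel] at this
    have h5 : w x ≤ wStar (x - z) * w z := by
      have := hw.submul (x - z) z
      rwa [sub_add_cancel] at this
    have hstar1 : (0:ℝ) ≤ wStar (x - z) := le_trans zero_le_one (hw.one_le_star _)
    have hstar2 : (0:ℝ) ≤ wStar (z - y') := le_trans zero_le_one (hw.one_le_star _)
    have h3 : |f y'| ≤ Nf * (wStar (x - z) * wStar (z - y')) * (w x)⁻¹ := by
      rw [← div_eq_mul_inv, le_div_iff₀ hwx]
      calc |f y'| * w x ≤ |f y'| * (wStar (x - z) * w z) :=
            mul_le_mul_of_nonneg_left h5 (abs_nonneg _)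
      _ ≤ |f y'| * (wStar (x - z) * (wStar (z - y') * w y')) := by
          apply mul_le_mul_of_nonneg_left _ (abs_nonneg _)
          exact mul_le_mul_of_nonneg_left h4 hstar1
      _ = (|f y'| * w y') * (wStar (x - z) * wStar (z - y')) := by ring
      _ ≤ Nf * (wStar (x - z) * wStar (z - y')) :=
          mul_le_mul_of_nonneg_right (hNf y') (mul_nonneg hstar1 hstar2)
    have hGt1 : 0 ≤ Gt 𝔰 ℓ G t' (x - z) := Gt_nonneg hGnonneg ht'pos _
    have hGt2 : 0 ≤ Gt 𝔰 ℓ G t' (z - y') := Gt_nonneg hGnonneg ht'pos _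
    calc ‖DK k t' x z * Q t' z y' * f y'‖
        = |DK k t' x z| * |Q t' z y'| * |f y'| := by
          rw [Real.norm_eq_abs, abs_mul, abs_mul]
    _ ≤ (CK * t' ^ pk * Gt 𝔰 ℓ G t' (x - z)) * (C₁ * Gt 𝔰 ℓ G t' (z - y')) * |f y'| := by
        apply mul_le_mul_of_nonneg_right _ (abs_nonneg _)
        exact mul_le_mul h1 h2 (abs_nonneg _) (by positivity)
    _ ≤ (CK * t' ^ pk * Gt 𝔰 ℓ G t' (x - z)) * (C₁ * Gt 𝔰 ℓ G t' (z - y'))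
          * (Nf * (wStar (x - z) * wStar (z - y')) * (w x)⁻¹) := by
        apply mul_le_mul_of_nonneg_left h3 (by positivity)
    _ = (c0 * b1 z) * (Gt 𝔰 ℓ G t' (z - y') * wStar (z - y')) := by
        rw [hc0, hb1]; ring
  -- integrability on the product space
  have hint : Integrable (Function.uncurry fun z y' =>
      DK k t' x z * Q t' z y' * f y') ((volume : Measure (Fin (d+1) → ℝ)).prod volume) := by
    constructor
    · exact hHm.aestronglyMeasurable
    · rw [show Function.uncurry (fun z y' => DK k t' x z * Q t' z y' * f y')
          = fun p : (Fin (d+1) → ℝ) × (Fin (d+1) → ℝ) =>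
            DK k t' x p.1 * Q t' p.1 p.2 * f p.2 from rfl]
      rw [hasFiniteIntegral_iff_norm]
      rw [lintegral_prod _ (hHm.norm.ennreal_ofReal.aemeasurable)]
      have hJB : ENNReal.ofReal B * Jint 𝔰 ≠ ⊤ :=
        (ENNReal.mul_lt_top ENNReal.ofReal_lt_top (J_lt_top h𝔰)).ne
      calc (∫⁻ z : Fin (d+1) → ℝ, ∫⁻ y' : Fin (d+1) → ℝ,
            ENNReal.ofReal ‖DK k t' x z * Q t' z y' * f y'‖)
          ≤ ∫⁻ z : Fin (d+1) → ℝ,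
              (ENNReal.ofReal (c0 * b1 z)) * (ENNReal.ofReal B * Jint 𝔰) := by
            apply lintegral_mono
            intro z
            calc (∫⁻ y' : Fin (d+1) → ℝ, ENNReal.ofReal ‖DK k t' x z * Q t' z y' * f y'‖)
                ≤ ∫⁻ y' : Fin (d+1) → ℝ, ENNReal.ofReal (c0 * b1 z)
                    * ENNReal.ofReal (Gt 𝔰 ℓ G t' (z - y') * wStar (z - y')) := by
                  apply lintegral_mono
                  intro y'
                  exact (ENNReal.ofReal_le_ofReal (hpt z y')).trans
                    (le_of_eq (ENNReal.ofReal_mul (mul_nonneg hc00 (hb10 z))))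
            _ = ENNReal.ofReal (c0 * b1 z) * ∫⁻ y' : Fin (d+1) → ℝ,
                  ENNReal.ofReal (Gt 𝔰 ℓ G t' (z - y') * wStar (z - y')) :=
                lintegral_const_mul' _ _ ENNReal.ofReal_ne_top
            _ ≤ ENNReal.ofReal (c0 * b1 z) * (ENNReal.ofReal B * Jint 𝔰) :=
                mul_le_mul_right (GW_left h𝔰 hℓ hGmeas hGnonneg hw hB1 hB ht' z) _
      _ = (ENNReal.ofReal c0 * (ENNReal.ofReal B * Jint 𝔰))
            * ∫⁻ z : Fin (d+1) → ℝ, ENNReal.ofReal (b1 z) := by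
          rw [← lintegral_const_mul' _ _
            (ENNReal.mul_ne_top ENNReal.ofReal_ne_top hJB)]
          congr 1; funext z
          rw [ENNReal.ofReal_mul hc00]; ring
      _ ≤ (ENNReal.ofReal c0 * (ENNReal.ofReal B * Jint 𝔰))
            * (ENNReal.ofReal B * Jint 𝔰) := by
          apply mul_le_mul_right
          exact GW_left h𝔰 hℓ hGmeas hGnonneg hw hB1 hB ht' x
      _ < ⊤ := by
          apply ENNReal.mul_lt_top
          · exact ENNReal.mul_lt_top ENNReal.ofReal_lt_top
              (lt_of_le_of_ne le_top hJB)
          · exact lt_of_le_of_ne le_top hJB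
  -- now swap
  calc ∫ y, (∫ z, DK k t' x z * Q t' z y) * f y
      = ∫ y, ∫ z, DK k t' x z * Q t' z y * f y := by
        congr 1; funext y
        exact (integral_mul_const (f y) _).symm
  _ = ∫ z, ∫ y, DK k t' x z * Q t' z y * f y := (integral_integral_swap hint).symm
  _ = ∫ z, DK k t' x z * ∫ y, Q t' z y * f y := by
      congr 1; funext z
      simp_rw [mul_assoc]
      exact integral_const_mul _ _

end Aux7
/-- Lemma 4.2 (i). -/
theorem regularizing_kernel_besov_bound
    {d : ℕ} (𝔰 : Fin (d + 1) → ℝ) (h𝔰 : ∀ i, 1 ≤ 𝔰 i) (ℓ : ℝ) (hℓ : 0 < ℓ)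
    (G : (Fin (d + 1) → ℝ) → ℝ) (hGmeas : Measurable G) (hGnonneg : ∀ x, 0 ≤ G x)
    (w wStar : (Fin (d + 1) → ℝ) → ℝ) (hw : GControlled 𝔰 ℓ G w wStar)
    (Q : ℝ → (Fin (d + 1) → ℝ) → (Fin (d + 1) → ℝ) → ℝ) (hQ : GSemigroup 𝔰 ℓ G Q)
    (βb δ CK : ℝ) (hβb : 0 < βb) (hδ : 0 < δ) (hCK : 0 < CK)
    (K : ℝ → (Fin (d + 1) → ℝ) → (Fin (d + 1) → ℝ) → ℝ)
    (DK : (Fin (d + 1) → ℕ) → ℝ → (Fin (d + 1) → ℝ) → (Fin (d + 1) → ℝ) → ℝ)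
    (hK : RegKernel 𝔰 ℓ G Q βb δ CK K DK)
    (α : ℝ) (hα : α ≤ 0) :
    ∃ C : ℝ, 0 < C ∧ ∀ f : (Fin (d + 1) → ℝ) → ℝ, Measurable f →
      wNorm w f < ⊤ →
      (⨆ s ∈ Set.Ioc (0 : ℝ) 1, ENNReal.ofReal (s ^ (-α / ℓ)) *
          wNorm w fun x => ∫ y, Q s x y * f y) < ⊤ →
      (∀ k : Fin (d + 1) → ℕ, sDeg 𝔰 k < δ → ∀ t ∈ Set.Ioc (0 : ℝ) 1,
        wNorm w (fun x => ∫ y, DK k t x y * f y)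
          ≤ ENNReal.ofReal (C * CK * t ^ ((α + βb - sDeg 𝔰 k) / ℓ - 1)) *
              ⨆ s ∈ Set.Ioc (0 : ℝ) 1, ENNReal.ofReal (s ^ (-α / ℓ)) *
                wNorm w fun x => ∫ y, Q s x y * f y) ∧
      (∀ k : Fin (d + 1) → ℕ, sDeg 𝔰 k < min (α + βb) δ →
        ∫⁻ t in Set.Ioc (0 : ℝ) 1, wNorm w (fun x => ∫ y, DK k t x y * f y) < ⊤) := by
  obtain ⟨B, hB1, hGB, hB⟩ := exists_keyBound h𝔰 hℓ hGnonneg hw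
  obtain ⟨C₁, hC₁pos, hC₁⟩ := hQ.upper
  have hJlt : Jint 𝔰 < ⊤ := J_lt_top h𝔰
  set J' : ℝ := (Jint 𝔰).toReal with hJ'def
  have hJ' : Jint 𝔰 = ENNReal.ofReal J' := (ENNReal.ofReal_toReal hJlt.ne).symm
  have hJ'0 : 0 ≤ J' := ENNReal.toReal_nonneg
  set twoPow : ℝ := 2 ^ ((|α + βb| + δ) / ℓ + 1) with htp
  have htwoPow : 0 < twoPow := Real.rpow_pos_of_pos two_pos _
  set C : ℝ := B * J' * twoPow + 1 with hCdef
  have hBJt : 0 ≤ B * J' * twoPow := by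
    have : (0:ℝ) ≤ B := le_trans zero_le_one hB1
    positivity
  have hCpos : 0 < C := by rw [hCdef]; linarith
  refine ⟨C, hCpos, ?_⟩
  intro f hf hNfin hNQfin
  set NQe : ℝ≥0∞ := ⨆ s ∈ Set.Ioc (0 : ℝ) 1, ENNReal.ofReal (s ^ (-α / ℓ)) *
      wNorm w (fun x => ∫ y, Q s x y * f y) with hNQe
  set NQ' : ℝ := NQe.toReal with hNQ'def
  have hNQ'0 : 0 ≤ NQ' := ENNReal.toReal_nonneg
  set Nf : ℝ := (wNorm w f).toReal with hNfdef
  have hNf : ∀ y, |f y| * w y ≤ Nf := by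
    intro y
    have h1 : ENNReal.ofReal (|f y| * w y) ≤ wNorm w f :=
      le_iSup (fun x => ENNReal.ofReal (|f x| * w x)) y
    exact (ENNReal.ofReal_le_iff_le_toReal hNfin.ne).mp h1
  -- main pointwise estimate
  have main : ∀ k : Fin (d + 1) → ℕ, sDeg 𝔰 k < δ → ∀ t ∈ Set.Ioc (0 : ℝ) 1,
      wNorm w (fun x => ∫ y, DK k t x y * f y)
        ≤ ENNReal.ofReal (C * CK * t ^ ((α + βb - sDeg 𝔰 k) / ℓ - 1)) * NQe := by
    intro k hk t ht
    have htpos : 0 < t := ht.1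
    set t' : ℝ := t / 2 with ht'def
    have ht'pos : 0 < t' := by rw [ht'def]; linarith
    have ht' : t' ∈ Set.Ioc (0 : ℝ) 1 := ⟨ht'pos, by rw [ht'def]; linarith [ht.2]⟩
    have hts : t - t' = t' := by rw [ht'def]; ring
    set κ : ℝ := sDeg 𝔰 k with hκ
    set e : ℝ := (α + βb - κ) / ℓ - 1 with he
    set pk : ℝ := (βb - κ) / ℓ - 1 with hpk
    -- kernel identity
    have hident : ∀ x y, DK k t x y = ∫ z, DK k t' x z * Q t' z y := by
      intro x y
      have := kernelId h𝔰 hℓ hGmeas hGnonneg hw hQ hK hCK.le k hk t t' ht'pos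
        (by rw [ht'def]; linarith) ht.2 x y
      rwa [hts] at this
    -- g := Q_{t'} f
    set g : (Fin (d+1) → ℝ) → ℝ := fun z => ∫ y, Q t' z y * f y with hg
    have hgbd : ∀ z, |g z| * w z ≤ t' ^ (α / ℓ) * NQ' := by
      intro z
      have h1 : ENNReal.ofReal (t' ^ (-α / ℓ)) * wNorm w g ≤ NQe := by
        rw [hNQe]
        exact le_iSup₂ (f := fun (s : ℝ) (_ : s ∈ Set.Ioc (0:ℝ) 1) =>
          ENNReal.ofReal (s ^ (-α / ℓ)) * wNorm w fun x => ∫ y, Q s x y * f y) t' ht'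
      have h2 : ENNReal.ofReal (|g z| * w z) ≤ wNorm w g :=
        le_iSup (fun x => ENNReal.ofReal (|g x| * w x)) z
      have h3 : ENNReal.ofReal (t' ^ (-α / ℓ) * (|g z| * w z)) ≤ NQe := by
        rw [ENNReal.ofReal_mul (Real.rpow_nonneg ht'pos.le _)]
        exact le_trans (mul_le_mul_right h2 _) h1
      have h4 : t' ^ (-α / ℓ) * (|g z| * w z) ≤ NQ' :=
        (ENNReal.ofReal_le_iff_le_toReal hNQfin.ne).mp h3
      have h5 : t' ^ (α / ℓ) * t' ^ (-α / ℓ) = 1 := by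
        rw [← Real.rpow_add ht'pos, show α / ℓ + -α / ℓ = 0 by ring, Real.rpow_zero]
      calc |g z| * w z = t' ^ (α / ℓ) * t' ^ (-α / ℓ) * (|g z| * w z) := by
            rw [h5, one_mul]
      _ = t' ^ (α / ℓ) * (t' ^ (-α / ℓ) * (|g z| * w z)) := by ring
      _ ≤ t' ^ (α / ℓ) * NQ' :=
          mul_le_mul_of_nonneg_left h4 (Real.rpow_nonneg ht'pos.le _)
    -- Fubini: the operator applied to f factorizes
    have hident2 : ∀ x, (∫ y, DK k t x y * f y) = ∫ z, DK k t' x z * g z := by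
      intro x
      calc ∫ y, DK k t x y * f y = ∫ y, (∫ z, DK k t' x z * Q t' z y) * f y := by
            congr 1; funext y; rw [hident x y]
      _ = ∫ z, DK k t' x z * g z :=
          fubini_step h𝔰 hℓ hGmeas hGnonneg hw hQ hCK.le hK hB1 hB hf hNf ht' hk x
    -- the pointwise weighted bound
    have hbd : ∀ x, |∫ y, DK k t x y * f y| * w x ≤ C * CK * t ^ e * NQ' := by
      intro x
      rw [hident2 x]
      have hwx : 0 < w x := hw.pos x
      set c1 : ℝ := CK * t' ^ pk * (t' ^ (α / ℓ) * NQ') * (w x)⁻¹ with hc1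
      have hc10 : 0 ≤ c1 := by positivity
      -- pointwise bound on the integrand
      have hptw : ∀ z, ‖DK k t' x z * g z‖
          ≤ c1 * (Gt 𝔰 ℓ G t' (x - z) * wStar (x - z)) := by
        intro z
        have h1 : |DK k t' x z| ≤ CK * t' ^ pk * Gt 𝔰 ℓ G t' (x - z) :=
          hK.upper k hk t' ht'pos x z
        have h5 : w x ≤ wStar (x - z) * w z := by
          have := hw.submul (x - z) z
          rwa [sub_add_cancel] at this
        have hwz : 0 < w z := hw.pos z
        have hstar1 : (0:ℝ) ≤ wStar (x - z) := le_trans zero_le_one (hw.one_le_star _)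
        have h2 : |g z| ≤ (t' ^ (α / ℓ) * NQ') * wStar (x - z) * (w x)⁻¹ := by
          rw [← div_eq_mul_inv, le_div_iff₀ hwx]
          calc |g z| * w x ≤ |g z| * (wStar (x - z) * w z) :=
                mul_le_mul_of_nonneg_left h5 (abs_nonneg _)
          _ = (|g z| * w z) * wStar (x - z) := by ring
          _ ≤ (t' ^ (α / ℓ) * NQ') * wStar (x - z) :=
              mul_le_mul_of_nonneg_right (hgbd z) hstar1
        have hGt1 : 0 ≤ Gt 𝔰 ℓ G t' (x - z) := Gt_nonneg hGnonneg ht'pos _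
        calc ‖DK k t' x z * g z‖ = |DK k t' x z| * |g z| := by
              rw [Real.norm_eq_abs, abs_mul]
        _ ≤ (CK * t' ^ pk * Gt 𝔰 ℓ G t' (x - z))
              * ((t' ^ (α / ℓ) * NQ') * wStar (x - z) * (w x)⁻¹) :=
            mul_le_mul h1 h2 (abs_nonneg _) (by positivity)
        _ = c1 * (Gt 𝔰 ℓ G t' (x - z) * wStar (x - z)) := by rw [hc1]; ring
      -- integrate the bound
      have hlint : (∫⁻ z : Fin (d+1) → ℝ, ENNReal.ofReal ‖DK k t' x z * g z‖)
          ≤ ENNReal.ofReal (c1 * (B * J')) := by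
        calc (∫⁻ z : Fin (d+1) → ℝ, ENNReal.ofReal ‖DK k t' x z * g z‖)
            ≤ ∫⁻ z : Fin (d+1) → ℝ, ENNReal.ofReal c1
                * ENNReal.ofReal (Gt 𝔰 ℓ G t' (x - z) * wStar (x - z)) := by
              apply lintegral_mono
              intro z
              exact (ENNReal.ofReal_le_ofReal (hptw z)).trans
                (le_of_eq (ENNReal.ofReal_mul hc10))
        _ = ENNReal.ofReal c1 * ∫⁻ z : Fin (d+1) → ℝ,
              ENNReal.ofReal (Gt 𝔰 ℓ G t' (x - z) * wStar (x - z)) :=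
            lintegral_const_mul' _ _ ENNReal.ofReal_ne_top
        _ ≤ ENNReal.ofReal c1 * (ENNReal.ofReal B * Jint 𝔰) :=
            mul_le_mul_right (GW_left h𝔰 hℓ hGmeas hGnonneg hw hB1 hB ht' x) _
        _ = ENNReal.ofReal (c1 * (B * J')) := by
            rw [hJ', ← ENNReal.ofReal_mul (le_trans zero_le_one hB1),
              ← ENNReal.ofReal_mul hc10]
      have habs : |∫ z, DK k t' x z * g z| ≤ c1 * (B * J') := by
        have h6 : ‖∫ z, DK k t' x z * g z‖
            ≤ (∫⁻ z : Fin (d+1) → ℝ, ENNReal.ofReal ‖DK k t' x z * g z‖).toReal :=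
          norm_integral_le_lintegral_norm _
        rw [Real.norm_eq_abs] at h6
        refine h6.trans (ENNReal.toReal_le_of_le_ofReal
          (mul_nonneg hc10 (mul_nonneg (le_trans zero_le_one hB1) hJ'0)) hlint)
      -- cancel w x and compare powers of t
      have hc1w : c1 * (B * J') * w x = CK * (t' ^ pk * t' ^ (α / ℓ)) * NQ' * (B * J') := by
        have hinv : (w x)⁻¹ * w x = 1 := inv_mul_cancel₀ hwx.ne'
        calc c1 * (B * J') * w x
            = CK * (t' ^ pk * t' ^ (α / ℓ)) * NQ' * (B * J') * ((w x)⁻¹ * w x) := by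
              rw [hc1]; ring
        _ = CK * (t' ^ pk * t' ^ (α / ℓ)) * NQ' * (B * J') := by rw [hinv, mul_one]
      have hpow : t' ^ pk * t' ^ (α / ℓ) = t' ^ e := by
        rw [← Real.rpow_add ht'pos]
        congr 1
        rw [hpk, he]
        ring
      have ht'e : t' ^ e ≤ t ^ e * twoPow := by
        have h7 : t' ^ e = t ^ e * 2 ^ (-e) := by
          rw [ht'def, Real.div_rpow htpos.le (by norm_num : (0:ℝ) ≤ 2),
            Real.rpow_neg (by norm_num : (0:ℝ) ≤ 2), div_eq_mul_inv]
        rw [h7]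
        apply mul_le_mul_of_nonneg_left _ (Real.rpow_nonneg htpos.le _)
        rw [htp]
        apply Real.rpow_le_rpow_of_exponent_le one_le_two
        have h8 : κ - (α + βb) ≤ |α + βb| + δ := by
          have := neg_abs_le (α + βb)
          have hκδ : κ < δ := hk
          linarith
        have h9 : (κ - (α + βb)) / ℓ ≤ (|α + βb| + δ) / ℓ := by gcongr
        rw [he]
        have : -((α + βb - κ) / ℓ - 1) = (κ - (α + βb)) / ℓ + 1 := by ring
        rw [this]
        linarith
      calc |∫ z, DK k t' x z * g z| * w x ≤ c1 * (B * J') * w x :=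
            mul_le_mul_of_nonneg_right habs hwx.le
      _ = CK * (t' ^ pk * t' ^ (α / ℓ)) * NQ' * (B * J') := hc1w
      _ = CK * t' ^ e * NQ' * (B * J') := by rw [hpow]
      _ ≤ CK * (t ^ e * twoPow) * NQ' * (B * J') := by
          have hBJ : 0 ≤ B * J' := mul_nonneg (le_trans zero_le_one hB1) hJ'0
          have : CK * t' ^ e ≤ CK * (t ^ e * twoPow) :=
            mul_le_mul_of_nonneg_left ht'e hCK.le
          exact mul_le_mul_of_nonneg_right
            (mul_le_mul_of_nonneg_right this hNQ'0) hBJ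
      _ = (B * J' * twoPow) * CK * t ^ e * NQ' := by ring
      _ ≤ C * CK * t ^ e * NQ' := by
          have hCKt : 0 ≤ CK * t ^ e * NQ' := by positivity
          have hle : B * J' * twoPow ≤ C := by rw [hCdef]; linarith
          calc (B * J' * twoPow) * CK * t ^ e * NQ'
              = (B * J' * twoPow) * (CK * t ^ e * NQ') := by ring
          _ ≤ C * (CK * t ^ e * NQ') := mul_le_mul_of_nonneg_right hle hCKt
          _ = C * CK * t ^ e * NQ' := by ring
    -- conclude the wNorm bound
    apply iSup_le
    intro x
    calc ENNReal.ofReal (|∫ y, DK k t x y * f y| * w x)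
        ≤ ENNReal.ofReal (C * CK * t ^ e * NQ') := ENNReal.ofReal_le_ofReal (hbd x)
    _ = ENNReal.ofReal (C * CK * t ^ e) * NQe := by
        rw [ENNReal.ofReal_mul (by positivity), hNQ'def, ENNReal.ofReal_toReal hNQfin.ne]
  constructor
  · exact main
  · -- integrability in t
    intro k hk
    have hkδ : sDeg 𝔰 k < δ := lt_of_lt_of_le hk (min_le_right _ _)
    have hkαβ : sDeg 𝔰 k < α + βb := lt_of_lt_of_le hk (min_le_left _ _)
    set e : ℝ := (α + βb - sDeg 𝔰 k) / ℓ - 1 with he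
    have hegt : (-1:ℝ) < e := by
      rw [he]
      have : 0 < (α + βb - sDeg 𝔰 k) / ℓ := div_pos (by linarith) hℓ
      linarith
    have hbound : ∀ t ∈ Set.Ioc (0:ℝ) 1,
        wNorm w (fun x => ∫ y, DK k t x y * f y)
          ≤ (ENNReal.ofReal (C * CK) * NQe) * ENNReal.ofReal (t ^ e) := by
      intro t ht
      refine (main k hkδ t ht).trans (le_of_eq ?_)
      rw [show C * CK * t ^ e = (C * CK) * t ^ e from rfl,
        ENNReal.ofReal_mul (by positivity)]
      ring
    have hmeasb : Measurable fun t : ℝ =>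
        (ENNReal.ofReal (C * CK) * NQe) * ENNReal.ofReal (t ^ e) := by
      apply Measurable.const_mul
      · exact (measurable_id.pow measurable_const).ennreal_ofReal
    calc (∫⁻ t in Set.Ioc (0:ℝ) 1, wNorm w (fun x => ∫ y, DK k t x y * f y))
        ≤ ∫⁻ t in Set.Ioc (0:ℝ) 1,
            (ENNReal.ofReal (C * CK) * NQe) * ENNReal.ofReal (t ^ e) :=
          setLIntegral_mono hmeasb hbound
    _ = (ENNReal.ofReal (C * CK) * NQe) * ∫⁻ t in Set.Ioc (0:ℝ) 1,
          ENNReal.ofReal (t ^ e) :=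
        lintegral_const_mul' _ _
          (ENNReal.mul_ne_top ENNReal.ofReal_ne_top hNQfin.ne)
    _ < ⊤ := by
        apply ENNReal.mul_lt_top
        · exact ENNReal.mul_lt_top ENNReal.ofReal_lt_top hNQfin
        · have hio : IntegrableOn (fun t : ℝ => t ^ e) (Set.Ioc (0:ℝ) 1) volume := by
            have h1 := intervalIntegral.intervalIntegrable_rpow' (a := 0) (b := 1) hegt
            rwa [intervalIntegrable_iff, Set.uIoc_of_le zero_le_one] at h1
          exact Integrable.lintegral_lt_top hio
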